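/- Let U be a finite set, T a left-continuous t-norm with residual implicator I, R : U × U → [0,1] a reflexive and T-transitive fuzzy relation, and A : U → [0,1] a fuzzy set. Define the lower approximation apr(A)(u) = min over v ∈ U of I(R(v,u), A(v)). Then apr(A) is the largest granularly representable fuzzy set contained in A; that is: (1) apr(A)(u) ≤ A(u) for all u; (2) apr(A) satisfies T(R(v,u), apr(A)(u)) ≤ apr(A)(v) for all u, v; and (3) any fuzzy set B with T(R(v,u), B(u)) ≤ B(v) for all u, v and B ≤ A pointwise satisfies B ≤ apr(A) pointwise. -/
import Mathlib


open Set Topology Filter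

/-- A t-norm on the unit interval (modeled as a real binary operation whose
relevant properties hold on `[0,1]`). -/
def IsTNorm (T : ℝ → ℝ → ℝ) : Prop :=
  (∀ x ∈ Icc (0:ℝ) 1, ∀ y ∈ Icc (0:ℝ) 1, T x y ∈ Icc (0:ℝ) 1) ∧
  (∀ x y : ℝ, T x y = T y x) ∧
  (∀ x y z : ℝ, T (T x y) z = T x (T y z)) ∧
  (∀ x ∈ Icc (0:ℝ) 1, ∀ y ∈ Icc (0:ℝ) 1, ∀ z ∈ Icc (0:ℝ) 1, y ≤ z → T x y ≤ T x z) ∧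
  (∀ x ∈ Icc (0:ℝ) 1, T x 1 = x)

/-- Left continuity of a t-norm (in each argument; by commutativity it suffices
to require it in the second argument). -/
def LeftContinuousTNorm (T : ℝ → ℝ → ℝ) : Prop :=
  ∀ x ∈ Icc (0:ℝ) 1, ∀ y ∈ Icc (0:ℝ) 1, ContinuousWithinAt (fun z => T x z) (Iic y) y

/-- The residual implicator `I(x,y) = sup {λ ∈ [0,1] : T(x,λ) ≤ y}`. -/
noncomputable def resImp (T : ℝ → ℝ → ℝ) (x y : ℝ) : ℝ :=
  sSup {l : ℝ | l ∈ Icc (0:ℝ) 1 ∧ T x l ≤ y}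

section Aux

variable {T : ℝ → ℝ → ℝ}

lemma tnorm_zero (hT : IsTNorm T) {x : ℝ} (hx : x ∈ Icc (0:ℝ) 1) : T x 0 = 0 := by
  obtain ⟨hmem, hcomm, _, hmono, hone⟩ := hT
  have h10 : T 1 0 = 0 := by rw [hcomm]; exact hone 0 ⟨le_rfl, zero_le_one⟩
  have h0 : (0:ℝ) ∈ Icc (0:ℝ) 1 := ⟨le_rfl, zero_le_one⟩
  have h1 : (1:ℝ) ∈ Icc (0:ℝ) 1 := ⟨zero_le_one, le_rfl⟩
  have hle : T x 0 ≤ T 1 0 := by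
    rw [hcomm x 0, hcomm 1 0]
    exact hmono 0 h0 x hx 1 h1 hx.2
  have hge : 0 ≤ T x 0 := (hmem x hx 0 h0).1
  linarith [h10 ▸ hle]

lemma tnorm_mono_left (hT : IsTNorm T) {a b s : ℝ} (ha : a ∈ Icc (0:ℝ) 1)
    (hb : b ∈ Icc (0:ℝ) 1) (hs : s ∈ Icc (0:ℝ) 1) (hab : a ≤ b) : T a s ≤ T b s := by
  obtain ⟨_, hcomm, _, hmono, _⟩ := hT
  rw [hcomm a s, hcomm b s]
  exact hmono s hs a ha b hb hab

lemma le_resImp (hT : IsTNorm T) {x y l : ℝ} (hl : l ∈ Icc (0:ℝ) 1)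
    (h : T x l ≤ y) : l ≤ resImp T x y :=
  le_csSup ⟨1, fun z hz => hz.1.2⟩ ⟨hl, h⟩

lemma resImp_mem (hT : IsTNorm T) {x y : ℝ} (hx : x ∈ Icc (0:ℝ) 1)
    (hy : y ∈ Icc (0:ℝ) 1) : resImp T x y ∈ Icc (0:ℝ) 1 := by
  constructor
  · exact le_resImp hT ⟨le_rfl, zero_le_one⟩ (by rw [tnorm_zero hT hx]; exact hy.1)
  · exact csSup_le ⟨0, ⟨le_rfl, zero_le_one⟩, by rw [tnorm_zero hT hx]; exact hy.1⟩
      fun z hz => hz.1.2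

lemma T_resImp_le (hT : IsTNorm T) (hLC : LeftContinuousTNorm T) {x y : ℝ}
    (hx : x ∈ Icc (0:ℝ) 1) (hy : y ∈ Icc (0:ℝ) 1) : T x (resImp T x y) ≤ y := by
  set s := resImp T x y with hsdef
  have hs : s ∈ Icc (0:ℝ) 1 := resImp_mem hT hx hy
  have hz0 : T x 0 ≤ y := by rw [tnorm_zero hT hx]; exact hy.1
  rcases eq_or_lt_of_le hs.1 with h0 | h0
  · rw [← h0]; exact hz0
  · -- s > 0 : use left continuity
    have hbdd : BddAbove {l : ℝ | l ∈ Icc (0:ℝ) 1 ∧ T x l ≤ y} :=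
      ⟨1, fun z hz => hz.1.2⟩
    have hsub : ∀ z ∈ Ico (0:ℝ) s, T x z ≤ y := by
      intro z hz
      obtain ⟨l, hl, hzl⟩ := exists_lt_of_lt_csSup (s := {l : ℝ | l ∈ Icc (0:ℝ) 1 ∧ T x l ≤ y})
        ⟨0, ⟨⟨le_rfl, zero_le_one⟩, hz0⟩⟩ hz.2
      calc T x z ≤ T x l := hT.2.2.2.1 x hx z ⟨hz.1, le_trans hz.2.le hs.2⟩ l hl.1 hzl.le
        _ ≤ y := hl.2
    have hne : (𝓝[Ico (0:ℝ) s] s).NeBot := by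
      rw [← mem_closure_iff_nhdsWithin_neBot]
      rw [closure_Ico (ne_of_lt h0)]
      exact ⟨hs.1, le_rfl⟩
    have htend : Filter.Tendsto (fun z => T x z) (𝓝[Ico (0:ℝ) s] s) (𝓝 (T x s)) :=
      (hLC x hx s hs).mono_left (nhdsWithin_mono s (fun z hz => hz.2.le))
    exact le_of_tendsto htend
      (Filter.eventually_of_mem self_mem_nhdsWithin hsub)

lemma resImp_one (hT : IsTNorm T) {y : ℝ} (hy : y ∈ Icc (0:ℝ) 1) :
    resImp T 1 y = y := by
  have h1 : ∀ l ∈ Icc (0:ℝ) 1, T 1 l = l := by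
    intro l hl; rw [hT.2.1]; exact hT.2.2.2.2 l hl
  apply le_antisymm
  · exact csSup_le ⟨0, ⟨le_rfl, zero_le_one⟩,
      by rw [h1 0 ⟨le_rfl, zero_le_one⟩]; exact hy.1⟩
      fun z hz => (h1 z hz.1) ▸ hz.2
  · exact le_resImp hT hy (by rw [h1 y hy])

end Aux

theorem lower_approximation_largest_granular
    (U : Type*) [Fintype U] [Nonempty U]
    (T : ℝ → ℝ → ℝ) (hT : IsTNorm T) (hLC : LeftContinuousTNorm T)
    (R : U → U → ℝ) (hR : ∀ u v, R u v ∈ Icc (0:ℝ) 1)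
    (hRrefl : ∀ u, R u u = 1)
    (hRtrans : ∀ u v w, T (R u v) (R v w) ≤ R u w)
    (A : U → ℝ) (hA : ∀ u, A u ∈ Icc (0:ℝ) 1)
    (apr : U → ℝ) (hapr : ∀ u, apr u = ⨅ v, resImp T (R v u) (A v)) :
    (∀ u, apr u ≤ A u) ∧
    (∀ u v, T (R v u) (apr u) ≤ apr v) ∧
    (∀ B : U → ℝ, (∀ u, B u ∈ Icc (0:ℝ) 1) →
      (∀ u v, T (R v u) (B u) ≤ B v) → (∀ u, B u ≤ A u) → ∀ u, B u ≤ apr u) := by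
  have hRI : ∀ v u, resImp T (R v u) (A v) ∈ Icc (0:ℝ) 1 :=
    fun v u => resImp_mem hT (hR v u) (hA v)
  have hbdd : ∀ u : U, BddBelow (Set.range fun v => resImp T (R v u) (A v)) :=
    fun u => Set.Finite.bddBelow (Set.finite_range _)
  have haprle : ∀ u v, apr u ≤ resImp T (R v u) (A v) :=
    fun u v => (hapr u) ▸ ciInf_le (hbdd u) v
  have hapr_mem : ∀ u, apr u ∈ Icc (0:ℝ) 1 := fun u =>
    ⟨(hapr u) ▸ le_ciInf (fun v => (hRI v u).1), (haprle u u).trans (hRI u u).2⟩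
  refine ⟨?_, ?_, ?_⟩
  · intro u
    have := haprle u u
    rwa [hRrefl u, resImp_one hT (hA u)] at this
  · intro u v
    rw [hapr v]
    apply le_ciInf
    intro w
    have hs := hapr_mem u
    apply le_resImp hT (hT.1 _ (hR v u) _ hs)
    rw [← hT.2.2.1]
    calc T (T (R w v) (R v u)) (apr u)
        ≤ T (R w u) (apr u) :=
          tnorm_mono_left hT (hT.1 _ (hR w v) _ (hR v u)) (hR w u) hs (hRtrans w v u)
      _ ≤ T (R w u) (resImp T (R w u) (A w)) :=
          hT.2.2.2.1 _ (hR w u) _ hs _ (resImp_mem hT (hR w u) (hA w)) (haprle u w)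
      _ ≤ A w := T_resImp_le hT hLC (hR w u) (hA w)
  · intro B hB hgran hBA u
    rw [hapr u]
    exact le_ciInf fun v => le_resImp hT (hB u) ((hgran u v).trans (hBA v))
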